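/- Let S ⊂ ℙ²(ℂ) be the set of 12 triple points of the arrangement of nine lines given by the linear factors of (x³ − y³)(x³ − z³)(y³ − z³), i.e. the 12 points lying on three of the nine lines. Then the only homogeneous polynomial of degree 3 in ℂ[x,y,z] vanishing at every point of S is the zero polynomial. Consequently, since the space of homogeneous cubics has dimension 10, the evaluation map from the space of homogeneous cubics to ℂ¹² given by evaluating at (representatives of) the 12 points of S is injective with image of dimension 10, so the 12 points fail by exactly 2 to impose independent conditions on cubics (the superabundance s equals 2). -/

import Mathlib

open MvPolynomial

/-- The set of lines of the arrangement given by the nine linear factors of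
`(x³ − y³)(x³ − z³)(y³ − z³)` passing through the point with homogeneous coordinates `P`:
a line is encoded as a pair `(ω, k)` with `ω³ = 1`, where `k = 0, 1, 2` encodes the lines
`x = ωy`, `x = ωz`, `y = ωz` respectively. -/
def linesThrough (P : Fin 3 → ℂ) : Set (ℂ × Fin 3) :=
  {q | q.1 ^ 3 = 1 ∧
    ![P 0 = q.1 * P 1, P 0 = q.1 * P 2, P 1 = q.1 * P 2] q.2}

/-- The number of the nine lines passing through the point `P`. -/
noncomputable def numLines (P : Fin 3 → ℂ) : ℕ :=
  (linesThrough P).ncard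

/-- The evaluation map from the space of homogeneous cubics in `ℂ[x,y,z]` to `ℂ¹²`, given by
evaluating at representatives of the 12 points `e 0, …, e 11` of `ℙ²(ℂ)`. -/
noncomputable def evalMap (e : Fin 12 → Projectivization ℂ (Fin 3 → ℂ)) :
    (homogeneousSubmodule (Fin 3) ℂ 3) →ₗ[ℂ] (Fin 12 → ℂ) :=
  LinearMap.pi fun i =>
    (MvPolynomial.aeval ((e i).rep) :
        MvPolynomial (Fin 3) ℂ →ₐ[ℂ] ℂ).toLinearMap ∘ₗ
      (homogeneousSubmodule (Fin 3) ℂ 3).subtype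

namespace Stmt10Aux

/-- The exponent finsupp on `Fin 3` with the given three values. -/
noncomputable def mexp (t : ℕ × ℕ × ℕ) : Fin 3 →₀ ℕ :=
  Finsupp.single 0 t.1 + Finsupp.single 1 t.2.1 + Finsupp.single 2 t.2.2

@[simp] lemma mexp_zero (t : ℕ × ℕ × ℕ) : mexp t 0 = t.1 := by
  simp [mexp, Finsupp.single_apply]
@[simp] lemma mexp_one (t : ℕ × ℕ × ℕ) : mexp t 1 = t.2.1 := by
  simp [mexp, Finsupp.single_apply]
@[simp] lemma mexp_two (t : ℕ × ℕ × ℕ) : mexp t 2 = t.2.2 := by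
  simp [mexp, Finsupp.single_apply]

lemma mexp_inj : Function.Injective mexp := by
  intro s t h
  have h0 : mexp s 0 = mexp t 0 := by rw [h]
  have h1 : mexp s 1 = mexp t 1 := by rw [h]
  have h2 : mexp s 2 = mexp t 2 := by rw [h]
  simp only [mexp_zero, mexp_one, mexp_two] at h0 h1 h2
  exact Prod.ext h0 (Prod.ext h1 h2)

/-- The ten exponent triples of degree-3 monomials in three variables. -/
def vec : Fin 10 → ℕ × ℕ × ℕ :=
  ![(3,0,0),(0,3,0),(0,0,3),(2,1,0),(2,0,1),(1,2,0),(0,2,1),(1,0,2),(0,1,2),(1,1,1)]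

noncomputable def tl : Fin 10 → (Fin 3 →₀ ℕ) := fun i => mexp (vec i)

lemma tl_inj : Function.Injective tl :=
  mexp_inj.comp (by decide : Function.Injective vec)

/-- The set of the 10 degree-3 exponents. -/
noncomputable def D : Finset (Fin 3 →₀ ℕ) := Finset.image tl Finset.univ

lemma mem_D_of_deg {d : Fin 3 →₀ ℕ} (h3 : d 0 + d 1 + d 2 = 3) : d ∈ D := by
  have h : (d 0 = 3 ∧ d 1 = 0 ∧ d 2 = 0) ∨ (d 0 = 0 ∧ d 1 = 3 ∧ d 2 = 0) ∨
      (d 0 = 0 ∧ d 1 = 0 ∧ d 2 = 3) ∨ (d 0 = 2 ∧ d 1 = 1 ∧ d 2 = 0) ∨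
      (d 0 = 2 ∧ d 1 = 0 ∧ d 2 = 1) ∨ (d 0 = 1 ∧ d 1 = 2 ∧ d 2 = 0) ∨
      (d 0 = 0 ∧ d 1 = 2 ∧ d 2 = 1) ∨ (d 0 = 1 ∧ d 1 = 0 ∧ d 2 = 2) ∨
      (d 0 = 0 ∧ d 1 = 1 ∧ d 2 = 2) ∨ (d 0 = 1 ∧ d 1 = 1 ∧ d 2 = 1) := by
    have ha : d 0 ≤ 3 := by omega
    have hb : d 1 ≤ 3 := by omega
    have hc : d 2 ≤ 3 := by omega
    interval_cases h0 : (d 0) <;> interval_cases h1 : (d 1) <;> interval_cases h2 : (d 2) <;>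
      simp_all
  have key : ∀ i : Fin 10, d 0 = (vec i).1 → d 1 = (vec i).2.1 → d 2 = (vec i).2.2 → d ∈ D := by
    intro i e0 e1 e2
    refine Finset.mem_image.mpr ⟨i, Finset.mem_univ _, ?_⟩
    ext j
    fin_cases j <;> simp [tl, e0, e1, e2]
  rcases h with ⟨e0,e1,e2⟩|⟨e0,e1,e2⟩|⟨e0,e1,e2⟩|⟨e0,e1,e2⟩|⟨e0,e1,e2⟩|⟨e0,e1,e2⟩|⟨e0,e1,e2⟩|⟨e0,e1,e2⟩|⟨e0,e1,e2⟩|⟨e0,e1,e2⟩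
  exacts [key 0 e0 e1 e2, key 1 e0 e1 e2, key 2 e0 e1 e2, key 3 e0 e1 e2, key 4 e0 e1 e2,
    key 5 e0 e1 e2, key 6 e0 e1 e2, key 7 e0 e1 e2, key 8 e0 e1 e2, key 9 e0 e1 e2]

lemma degree_support {F : MvPolynomial (Fin 3) ℂ} (hF : F.IsHomogeneous 3) {d : Fin 3 →₀ ℕ}
    (hd : d ∈ F.support) : d 0 + d 1 + d 2 = 3 := by
  have h := hF (MvPolynomial.mem_support_iff.mp hd)
  rw [Finsupp.weight_apply, Finsupp.sum_fintype] at h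
  · simpa [Fin.sum_univ_three] using h
  · simp

lemma support_sub {F : MvPolynomial (Fin 3) ℂ} (hF : F.IsHomogeneous 3) :
    F.support ⊆ D :=
  fun _ hd => mem_D_of_deg (degree_support hF hd)

lemma sum_univ_10 {M : Type*} [AddCommMonoid M] (g : Fin 10 → M) :
    ∑ i, g i = g 0 + g 1 + g 2 + g 3 + g 4 + g 5 + g 6 + g 7 + g 8 + g 9 := by
  simp [Fin.sum_univ_succ, add_assoc]

lemma eval_formula {F : MvPolynomial (Fin 3) ℂ} (hF : F.IsHomogeneous 3) (x : Fin 3 → ℂ) :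
    eval x F = ∑ i : Fin 10,
      coeff (tl i) F * (x 0 ^ (vec i).1 * x 1 ^ (vec i).2.1 * x 2 ^ (vec i).2.2) := by
  rw [eval_eq']
  rw [Finset.sum_subset (support_sub hF) (fun d _ hd => by
      rw [MvPolynomial.notMem_support_iff.mp hd]; ring)]
  rw [D, Finset.sum_image (fun s _ t _ h => tl_inj h)]
  refine Finset.sum_congr rfl fun i _ => ?_
  rw [Fin.prod_univ_three]
  simp [tl]

lemma eval_smul3 {F : MvPolynomial (Fin 3) ℂ} (hF : F.IsHomogeneous 3) (c : ℂ) (x : Fin 3 → ℂ) :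
    eval (c • x) F = c ^ 3 * eval x F := by
  rw [eval_eq', eval_eq', Finset.mul_sum]
  refine Finset.sum_congr rfl fun d hd => ?_
  have h3 := degree_support hF hd
  rw [Fin.prod_univ_three, Fin.prod_univ_three]
  simp only [Pi.smul_apply, smul_eq_mul, mul_pow]
  have hc : c ^ 3 = c ^ d 0 * c ^ d 1 * c ^ d 2 := by rw [← pow_add, ← pow_add, h3]
  rw [hc]; ring

lemma linesThrough_smul {c : ℂ} (hc : c ≠ 0) (P : Fin 3 → ℂ) :
    linesThrough (c • P) = linesThrough P := by
  have key : ∀ u v q : ℂ, (c * u = q * (c * v)) ↔ (u = q * v) := by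
    intro u v q
    constructor
    · intro h; apply mul_left_cancel₀ hc; linear_combination h
    · intro h; linear_combination c * h
  ext ⟨q1, k⟩
  fin_cases k <;>
    simp only [linesThrough, Set.mem_setOf_eq, Pi.smul_apply, smul_eq_mul,
      Matrix.cons_val_zero, Matrix.cons_val_one, Matrix.head_cons, Matrix.cons_val_two,
      Matrix.tail_cons, Fin.isValue] <;>
    exact and_congr_right fun _ => key _ _ _

/-- The main vanishing lemma: a homogeneous cubic vanishing at all triple points is zero. -/
lemma key (F : MvPolynomial (Fin 3) ℂ) (hF : F.IsHomogeneous 3)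
    (h : ∀ P : Fin 3 → ℂ, P ≠ 0 → 2 ≤ numLines P → MvPolynomial.eval P F = 0) : F = 0 := by
  classical
  -- a primitive cube root of unity
  obtain ⟨o, hw⟩ : ∃ o : ℂ, o ^ 2 + o + 1 = 0 := by
    obtain ⟨z, hz⟩ := IsAlgClosed.exists_root (k := ℂ) (Polynomial.X ^ 2 + Polynomial.X + 1)
      (by
        have : (Polynomial.X ^ 2 + Polynomial.X + 1 : Polynomial ℂ).degree = 2 := by
          compute_degree!
        rw [this]; norm_num)
    exact ⟨z, by simpa [Polynomial.IsRoot] using hz⟩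
  have hw3 : o ^ 3 = 1 := by linear_combination (o - 1) * hw
  have hw6 : (o ^ 2) ^ 3 = 1 := by linear_combination (o ^ 3 + 1) * hw3
  have hwne : o ≠ 1 := by
    intro h1
    rw [h1] at hw
    norm_num at hw
  have hcube : ∀ z : ℂ, z ^ 3 = 1 → z = 1 ∨ z = o ∨ z = o ^ 2 := by
    intro z hz
    have hfac : (z - 1) * ((z - o) * (z - o ^ 2)) = 0 := by
      linear_combination hz + (-z ^ 2 + o * z - o + 1) * hw
    rcases mul_eq_zero.mp hfac with h' | h'
    · exact Or.inl (sub_eq_zero.mp h')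
    rcases mul_eq_zero.mp h' with h'' | h''
    · exact Or.inr (Or.inl (sub_eq_zero.mp h''))
    · exact Or.inr (Or.inr (sub_eq_zero.mp h''))
  have hfin : ∀ P : Fin 3 → ℂ, (linesThrough P).Finite := by
    intro P
    apply Set.Finite.subset (Set.Finite.prod
      ((Set.finite_singleton (o ^ 2)).insert o |>.insert 1) (Set.finite_univ (α := Fin 3)))
    rintro ⟨q1, k⟩ hq
    exact ⟨by simpa using hcube q1 hq.1, Set.mem_univ _⟩
  have two_le : ∀ (P : Fin 3 → ℂ) (q r : ℂ × Fin 3), q ∈ linesThrough P → r ∈ linesThrough P →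
      q ≠ r → 2 ≤ numLines P := by
    intro P q r hq hr hne
    have hsub : ({q, r} : Set (ℂ × Fin 3)) ⊆ linesThrough P := by
      rintro z (rfl | hz)
      · exact hq
      · rcases hz with rfl; exact hr
    have h2 : ({q, r} : Set (ℂ × Fin 3)).ncard = 2 := by
      rw [Set.ncard_insert_of_notMem (by simp [hne]) (Set.finite_singleton r),
        Set.ncard_singleton]
    rw [numLines, ← h2]
    exact Set.ncard_le_ncard hsub (hfin P)
  -- the nine points (1 : a : b)
  have ge2a : ∀ a b : ℂ, a ^ 3 = 1 → b ^ 3 = 1 → 2 ≤ numLines ![1, a, b] := by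
    intro a b ha hb
    refine two_le _ (a ^ 2, 0) (b ^ 2, 1)
      ⟨by linear_combination (a ^ 3 + 1) * ha, show (1 : ℂ) = a ^ 2 * a by linear_combination -ha⟩
      ⟨by linear_combination (b ^ 3 + 1) * hb, show (1 : ℂ) = b ^ 2 * b by linear_combination -hb⟩
      (by simp)
  -- the three coordinate points
  have ge2x : 2 ≤ numLines ![1, 0, 0] :=
    two_le _ (1, 2) (o, 2) ⟨one_pow 3, show (0 : ℂ) = 1 * 0 by ring⟩
      ⟨hw3, show (0 : ℂ) = o * 0 by ring⟩
      (fun hqq => hwne (congrArg Prod.fst hqq).symm)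
  have ge2y : 2 ≤ numLines ![0, 1, 0] :=
    two_le _ (1, 1) (o, 1) ⟨one_pow 3, show (0 : ℂ) = 1 * 0 by ring⟩
      ⟨hw3, show (0 : ℂ) = o * 0 by ring⟩
      (fun hqq => hwne (congrArg Prod.fst hqq).symm)
  have ge2z : 2 ≤ numLines ![0, 0, 1] :=
    two_le _ (1, 0) (o, 0) ⟨one_pow 3, show (0 : ℂ) = 1 * 0 by ring⟩
      ⟨hw3, show (0 : ℂ) = o * 0 by ring⟩
      (fun hqq => hwne (congrArg Prod.fst hqq).symm)
  -- names for the ten coefficients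
  set c300 := coeff (tl 0) F with hc300eq
  set c030 := coeff (tl 1) F with hc030eq
  set c003 := coeff (tl 2) F with hc003eq
  set c210 := coeff (tl 3) F with hc210eq
  set c201 := coeff (tl 4) F with hc201eq
  set c120 := coeff (tl 5) F with hc120eq
  set c021 := coeff (tl 6) F with hc021eq
  set c102 := coeff (tl 7) F with hc102eq
  set c012 := coeff (tl 8) F with hc012eq
  set c111 := coeff (tl 9) F with hc111eq
  have heval2 : ∀ x : Fin 3 → ℂ, eval x F =
      c300 * x 0 ^ 3 + c030 * x 1 ^ 3 + c003 * x 2 ^ 3 + c210 * (x 0 ^ 2 * x 1) +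
      c201 * (x 0 ^ 2 * x 2) + c120 * (x 0 * x 1 ^ 2) + c021 * (x 1 ^ 2 * x 2) +
      c102 * (x 0 * x 2 ^ 2) + c012 * (x 1 * x 2 ^ 2) + c111 * (x 0 * x 1 * x 2) := by
    intro x
    rw [eval_formula hF x, sum_univ_10]
    norm_num [show vec 0 = (3,0,0) from rfl, show vec 1 = (0,3,0) from rfl,
      show vec 2 = (0,0,3) from rfl, show vec 3 = (2,1,0) from rfl, show vec 4 = (2,0,1) from rfl,
      show vec 5 = (1,2,0) from rfl, show vec 6 = (0,2,1) from rfl, show vec 7 = (1,0,2) from rfl,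
      show vec 8 = (0,1,2) from rfl, show vec 9 = (1,1,1) from rfl]
    rfl
  have hne1 : ∀ a b : ℂ, (![1, a, b] : Fin 3 → ℂ) ≠ 0 :=
    fun a b hP => one_ne_zero (congrFun hP 0)
  have h100 := h ![1, 0, 0] (hne1 0 0) ge2x
  have h010 := h ![0, 1, 0] (fun hP => one_ne_zero (congrFun hP 1)) ge2y
  have h001 := h ![0, 0, 1] (fun hP => one_ne_zero (congrFun hP 2)) ge2z
  rw [heval2] at h100 h010 h001
  simp only [Matrix.cons_val_zero, Matrix.cons_val_one, Matrix.head_cons, Matrix.cons_val_two,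
    Matrix.tail_cons] at h100 h010 h001
  have hc300 : c300 = 0 := by linear_combination h100
  have hc030 : c030 = 0 := by linear_combination h010
  have hc003 : c003 = 0 := by linear_combination h001
  have E : ∀ a b : ℂ, a ^ 3 = 1 → b ^ 3 = 1 →
      c210 * a + c201 * b + c120 * a ^ 2 + c021 * a ^ 2 * b + c102 * b ^ 2 + c012 * a * b ^ 2 +
        c111 * a * b = 0 := by
    intro a b ha hb
    have hP := h ![1, a, b] (hne1 a b) (ge2a a b ha hb)
    rw [heval2] at hP
    simp only [Matrix.cons_val_zero, Matrix.cons_val_one, Matrix.head_cons, Matrix.cons_val_two,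
      Matrix.tail_cons] at hP
    linear_combination hP - hc300 - a ^ 3 * hc030 - b ^ 3 * hc003
  have hE00 := E 1 1 (one_pow 3) (one_pow 3)
  have hE01 := E 1 o (one_pow 3) hw3
  have hE02 := E 1 (o ^ 2) (one_pow 3) hw6
  have hE10 := E o 1 hw3 (one_pow 3)
  have hE11 := E o o hw3 hw3
  have hE12 := E o (o ^ 2) hw3 hw6
  have hE20 := E (o ^ 2) 1 hw6 (one_pow 3)
  have hE21 := E (o ^ 2) o hw6 hw3
  have hE22 := E (o ^ 2) (o ^ 2) hw6 hw6
  have hc210 : c210 = 0 := by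
    linear_combination (1/9 : ℂ) * hE00 + (1/9 : ℂ) * hE01 + (1/9 : ℂ) * hE02 + (o^2/9) * hE10 + (o^2/9) * hE11 + (o^2/9) * hE12 + (o/9) * hE20 + (o/9) * hE21 + (o/9) * hE22 +
      ((-2/3*o+2/3) * c210 + (-1/9*o^2-1/9*o-1/9) * c201 + (-1/3*o^3+1/3*o-1/3) * c120 + (-1/9*o^5-1/9*o^4-1/9) * c021 + (-1/9*o^4-1/9*o^2-1/9) * c102 + (-2/9*o^5+2/9*o^4-2/9*o^3-1/9*o^2+1/9*o-1/9) * c012 + (-2/9*o^3-1/9) * c111) * hw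
  have hc201 : c201 = 0 := by
    linear_combination (1/9 : ℂ) * hE00 + (o^2/9) * hE01 + (o/9) * hE02 + (1/9 : ℂ) * hE10 + (o^2/9) * hE11 + (o/9) * hE12 + (1/9 : ℂ) * hE20 + (o^2/9) * hE21 + (o/9) * hE22 +
      ((-1/9*o^2-1/9*o-1/9) * c210 + (-2/3*o+2/3) * c201 + (-1/9*o^4-1/9*o^2-1/9) * c120 + (-2/9*o^5+2/9*o^4-2/9*o^3-1/9*o^2+1/9*o-1/9) * c021 + (-1/3*o^3+1/3*o-1/3) * c102 + (-1/9*o^5-1/9*o^4-1/9) * c012 + (-2/9*o^3-1/9) * c111) * hw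
  have hc120 : c120 = 0 := by
    linear_combination (1/9 : ℂ) * hE00 + (1/9 : ℂ) * hE01 + (1/9 : ℂ) * hE02 + (o/9) * hE10 + (o/9) * hE11 + (o/9) * hE12 + (o^2/9) * hE20 + (o^2/9) * hE21 + (o^2/9) * hE22 +
      ((-1/3*o^2+1/3*o-1/3) * c210 + (-1/9*o^2-1/9*o-1/9) * c201 + (-1/3*o^4+1/3*o^3-2/3*o+2/3) * c120 + (-1/9*o^6-1/9*o^3-1/9) * c021 + (-1/9*o^4-1/9*o^2-1/9) * c102 + (-1/9*o^6+1/9*o^5-2/9*o^4+1/9*o^3-2/9*o^2+1/9*o-1/9) * c012 + (-1/9*o^4-1/9*o^2-1/9) * c111) * hw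
  have hc021 : c021 = 0 := by
    linear_combination (1/9 : ℂ) * hE00 + (o^2/9) * hE01 + (o/9) * hE02 + (o/9) * hE10 + (1/9 : ℂ) * hE11 + (o^2/9) * hE12 + (o^2/9) * hE20 + (o/9) * hE21 + (1/9 : ℂ) * hE22 +
      ((-1/9*o^2-1/9*o-1/9) * c210 + (-1/9*o^2-1/9*o-1/9) * c201 + (-1/9*o^4-1/9*o^2-1/9) * c120 + (-4/9*o^4+4/9*o^3-8/9*o+8/9) * c021 + (-1/9*o^4-1/9*o^2-1/9) * c102 + (-1/9*o^5-1/9*o^3-1/9*o^2+1/9*o-1/9) * c012 + (-1/9*o^3-2/9*o^2+1/9*o-1/9) * c111) * hw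
  have hc102 : c102 = 0 := by
    linear_combination (1/9 : ℂ) * hE00 + (o/9) * hE01 + (o^2/9) * hE02 + (1/9 : ℂ) * hE10 + (o/9) * hE11 + (o^2/9) * hE12 + (1/9 : ℂ) * hE20 + (o/9) * hE21 + (o^2/9) * hE22 +
      ((-1/9*o^2-1/9*o-1/9) * c210 + (-1/3*o^2+1/3*o-1/3) * c201 + (-1/9*o^4-1/9*o^2-1/9) * c120 + (-1/9*o^6+1/9*o^5-2/9*o^4+1/9*o^3-2/9*o^2+1/9*o-1/9) * c021 + (-1/3*o^4+1/3*o^3-2/3*o+2/3) * c102 + (-1/9*o^6-1/9*o^3-1/9) * c012 + (-1/9*o^4-1/9*o^2-1/9) * c111) * hw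
  have hc012 : c012 = 0 := by
    linear_combination (1/9 : ℂ) * hE00 + (o/9) * hE01 + (o^2/9) * hE02 + (o^2/9) * hE10 + (1/9 : ℂ) * hE11 + (o/9) * hE12 + (o/9) * hE20 + (o^2/9) * hE21 + (1/9 : ℂ) * hE22 +
      ((-1/9*o^2-1/9*o-1/9) * c210 + (-1/9*o^2-1/9*o-1/9) * c201 + (-1/9*o^4-1/9*o^2-1/9) * c120 + (-1/9*o^5-1/9*o^3-1/9*o^2+1/9*o-1/9) * c021 + (-1/9*o^4-1/9*o^2-1/9) * c102 + (-4/9*o^4+4/9*o^3-8/9*o+8/9) * c012 + (-1/9*o^3-2/9*o^2+1/9*o-1/9) * c111) * hw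
  have hc111 : c111 = 0 := by
    linear_combination (1/9 : ℂ) * hE00 + (o^2/9) * hE01 + (o/9) * hE02 + (o^2/9) * hE10 + (o/9) * hE11 + (1/9 : ℂ) * hE12 + (o/9) * hE20 + (1/9 : ℂ) * hE21 + (o^2/9) * hE22 +
      ((-1/9*o^2-1/9*o-1/9) * c210 + (-1/9*o^2-1/9*o-1/9) * c201 + (-1/9*o^4-1/9*o^2-1/9) * c120 + (-1/9*o^6+1/9*o^5-1/3*o^3+1/9*o-1/9) * c021 + (-1/9*o^4-1/9*o^2-1/9) * c102 + (-1/9*o^6+1/9*o^5-1/3*o^3+1/9*o-1/9) * c012 + (-1/9*o^4+1/9*o^3-8/9*o+8/9) * c111) * hw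
  -- conclude that all coefficients vanish
  apply MvPolynomial.ext
  intro d
  rw [MvPolynomial.coeff_zero]
  by_cases hd : d ∈ F.support
  · obtain ⟨i, -, rfl⟩ := Finset.mem_image.mp (support_sub hF hd)
    fin_cases i
    exacts [hc300, hc030, hc003, hc210, hc201, hc120, hc021, hc102, hc012, hc111]
  · exact MvPolynomial.notMem_support_iff.mp hd

end Stmt10Aux

/-- the only homogeneous cubic vanishing at all 12 triple points of the
arrangement of the nine linear factors of `(x³ − y³)(x³ − z³)(y³ − z³)` is the zero polynomial.
Consequently, since the space of homogeneous cubics has dimension 10, for any enumeration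
`e : Fin 12` of the triple points the evaluation map to `ℂ¹²` is injective with image of
dimension 10, so the 12 points fail by exactly 2 to impose independent conditions on cubics
(the superabundance `s` equals `2`). -/
theorem stmt10 :
    (∀ F : MvPolynomial (Fin 3) ℂ, F.IsHomogeneous 3 →
      (∀ P : Fin 3 → ℂ, P ≠ 0 → 2 ≤ numLines P → MvPolynomial.eval P F = 0) →
      F = 0) ∧
    Module.finrank ℂ (homogeneousSubmodule (Fin 3) ℂ 3) = 10 ∧
    ∀ e : Fin 12 → Projectivization ℂ (Fin 3 → ℂ),
      Function.Injective e →
      (∀ p : Projectivization ℂ (Fin 3 → ℂ),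
        2 ≤ numLines p.rep ↔ p ∈ Set.range e) →
      Function.Injective (evalMap e) ∧
      Module.finrank ℂ (LinearMap.range (evalMap e)) = 10 ∧
      12 - Module.finrank ℂ (LinearMap.range (evalMap e)) = 2 := by
  classical
  have hdim : Module.finrank ℂ (homogeneousSubmodule (Fin 3) ℂ 3) = 10 := by
    have hdeg : ∀ d : Fin 3 →₀ ℕ, d.degree = d 0 + d 1 + d 2 := by
      intro d
      rw [Finsupp.degree_eq_weight_one, Finsupp.weight_apply, Finsupp.sum_fintype]
      · simp [Fin.sum_univ_three]
      · simp
    have hset : {d : Fin 3 →₀ ℕ | d.degree = 3} = ↑Stmt10Aux.D := by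
      ext d
      simp only [Set.mem_setOf_eq, Finset.coe_sort_coe, Finset.mem_coe]
      constructor
      · intro hd
        exact Stmt10Aux.mem_D_of_deg (by rw [← hdeg]; exact hd)
      · intro hd
        obtain ⟨i, -, rfl⟩ := Finset.mem_image.mp hd
        rw [hdeg]
        have hall : ∀ j, (Stmt10Aux.vec j).1 + (Stmt10Aux.vec j).2.1 + (Stmt10Aux.vec j).2.2 = 3 :=
          by decide
        simpa [Stmt10Aux.tl] using hall i
    rw [homogeneousSubmodule_eq_finsupp_supported, hset,
      (AddMonoidAlgebra.supportedEquivFinsupp (R := ℂ) (S := ℂ) (↑Stmt10Aux.D : Set (Fin 3 →₀ ℕ))).finrank_eq,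
      Module.finrank_finsupp_self]
    simp [Stmt10Aux.D, Finset.card_image_of_injective _ Stmt10Aux.tl_inj]
    rw [Finset.card_image_of_injective _ (Stmt10Aux.tl_inj.comp PLift.down_injective)]
    simp
  refine ⟨Stmt10Aux.key, hdim, ?_⟩
  intro e he hchar
  have haeval : ∀ (x : Fin 3 → ℂ) (F : MvPolynomial (Fin 3) ℂ),
      MvPolynomial.aeval x F = MvPolynomial.eval x F :=
    fun x F => congrFun (congrArg DFunLike.coe (MvPolynomial.coe_aeval_eq_eval x)) F
  have hinj : Function.Injective (evalMap e) := by
    rw [injective_iff_map_eq_zero]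
    intro G hG
    have hzero : ∀ P : Fin 3 → ℂ, P ≠ 0 → 2 ≤ numLines P →
        MvPolynomial.eval P (G : MvPolynomial (Fin 3) ℂ) = 0 := by
      intro P hP h2
      obtain ⟨a, ha⟩ := (Projectivization.mk_eq_mk_iff ℂ _ _
        (Projectivization.rep_nonzero (Projectivization.mk ℂ P hP)) hP).mp
        (Projectivization.mk_rep (Projectivization.mk ℂ P hP))
      have h2' : 2 ≤ numLines (Projectivization.mk ℂ P hP).rep := by
        rw [numLines, ← ha, Units.smul_def, Stmt10Aux.linesThrough_smul (Units.ne_zero a)]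
        exact h2
      obtain ⟨i, hi⟩ := (hchar (Projectivization.mk ℂ P hP)).mp h2'
      have hzi : MvPolynomial.aeval ((e i).rep) (G : MvPolynomial (Fin 3) ℂ) = 0 := by
        have := congrFun hG i
        simpa [evalMap] using this
      rw [haeval, hi, ← ha, Units.smul_def, Stmt10Aux.eval_smul3 G.2] at hzi
      rcases mul_eq_zero.mp hzi with h' | h'
      · exact absurd h' (pow_ne_zero 3 (Units.ne_zero a))
      · exact h'
    exact Subtype.ext (Stmt10Aux.key G G.2 hzero)
  refine ⟨hinj, ?_, ?_⟩
  · rw [LinearMap.finrank_range_of_inj hinj, hdim]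
  · rw [LinearMap.finrank_range_of_inj hinj, hdim]
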